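/- arXiv:1901.04347 — 3 statements merged into one kernel-verified Lean document; each statement's English description precedes it below -/
import Mathlib

section
/- For every real number α, exp(α•B) · B · exp((π/2 − α)•B) = −Id, where Id is the 4×4 identity matrix; hence this product is a nonzero scalar multiple of the identity, giving a one-parameter family of decompositions of the canonical duality through the null-polarity B. -/
/-- The null-polarity matrix used in Cremona's method. -/
def Bmat : Matrix (Fin 4) (Fin 4) ℝ :=
  !![0, -1, 0, 0;
     1,  0, 0, 0;
     0,  0, 0, -1;
     0,  0, 1, 0]

lemma Bmat_sq : Bmat * Bmat = -1 := by
  ext i j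
  fin_cases i <;> fin_cases j <;>
    simp [Bmat, Matrix.mul_apply, Fin.sum_univ_four, Matrix.one_apply, Matrix.vecHead, Matrix.vecTail]

attribute [local instance] Matrix.frobeniusNormedRing Matrix.frobeniusNormedAlgebra

lemma exp_smul_Bmat (t : ℝ) :
    NormedSpace.exp (t • Bmat) =
      Real.cos t • (1 : Matrix (Fin 4) (Fin 4) ℝ) + Real.sin t • Bmat := by
  set f : ℂ →ₐ[ℝ] Matrix (Fin 4) (Fin 4) ℝ := Complex.liftAux Bmat Bmat_sq with hf
  have hcont : Continuous f := by
    have : (f : ℂ → Matrix (Fin 4) (Fin 4) ℝ) =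
        fun z => algebraMap ℝ _ z.re + z.im • Bmat := by
      funext z; simp [hf]
    rw [this]
    fun_prop
  have h1 : t • Bmat = f (t * Complex.I) := by
    simp [hf]
  rw [h1]
  refine (NormedSpace.map_exp f hcont _).symm.trans ?_
  have : NormedSpace.exp ((t : ℂ) * Complex.I) = Complex.cos t + Complex.sin t * Complex.I := by
    rw [← Complex.exp_eq_exp_ℂ, Complex.exp_mul_I]
  rw [this]
  simp [hf, Complex.cos_ofReal_re, Complex.sin_ofReal_re, Algebra.algebraMap_eq_smul_one]

/-- For every real `α`, `exp (α • B) * B * exp ((π/2 - α) • B) = -Id`; hence this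
product is a nonzero scalar multiple of the identity, giving a one-parameter
family of decompositions of the canonical duality through the null-polarity `B`. -/
theorem exp_decomposition_of_canonical_duality (α : ℝ) :
    NormedSpace.exp (α • Bmat) * Bmat * NormedSpace.exp ((Real.pi / 2 - α) • Bmat) =
        -(1 : Matrix (Fin 4) (Fin 4) ℝ) ∧
      ∃ c : ℝ, c ≠ 0 ∧
        NormedSpace.exp (α • Bmat) * Bmat * NormedSpace.exp ((Real.pi / 2 - α) • Bmat) =
          c • (1 : Matrix (Fin 4) (Fin 4) ℝ) := by
  have key : NormedSpace.exp (α • Bmat) * Bmat *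
      NormedSpace.exp ((Real.pi / 2 - α) • Bmat) = -1 := by
    have hc : Commute Bmat (NormedSpace.exp (α • Bmat)) :=
      ((Commute.refl Bmat).smul_right α).exp_right
    calc NormedSpace.exp (α • Bmat) * Bmat * NormedSpace.exp ((Real.pi / 2 - α) • Bmat)
        = Bmat * (NormedSpace.exp (α • Bmat) *
            NormedSpace.exp ((Real.pi / 2 - α) • Bmat)) := by
          rw [← hc.eq, mul_assoc]
      _ = Bmat * NormedSpace.exp ((Real.pi / 2) • Bmat) := by
          rw [← Matrix.exp_add_of_commute _ _
            (((Commute.refl Bmat).smul_right _).smul_left _), ← add_smul]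
          ring_nf
      _ = Bmat * Bmat := by
          rw [exp_smul_Bmat, Real.cos_pi_div_two, Real.sin_pi_div_two]
          simp
      _ = -1 := Bmat_sq
  exact ⟨key, -1, by norm_num, by rw [key]; simp⟩
end

section
/- Let M be an invertible 4×4 real matrix and let i ∈ ℝ⁴ be nonzero. Then the following are equivalent: (1) for every v ∈ ℝ⁴, the vector M·v lies in the linear span of {v, i} (i.e., the projective transformation represented by M maps every line of PG(3) through the point [i] to itself — the reciprocity condition for projection centre [i]); (2) there exist a nonzero real number c and a linear functional f : ℝ⁴ → ℝ such that M·v = c•v + f(v)•i for every v ∈ ℝ⁴ (i.e., M represents a central-axial collineation with centre [i], fixing pointwise the projective plane given by the kernel of f). -/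
open Matrix

/-- An endomorphism of a vector space that preserves every line is a scalar. -/
lemma aux_scalar {V : Type*} [AddCommGroup V] [Module ℝ V] (g : V →ₗ[ℝ] V)
    (h : ∀ v, g v ∈ Submodule.span ℝ {v}) : ∃ c : ℝ, ∀ v, g v = c • v := by
  -- the scalar attached to each vector
  have hsc : ∀ v : V, ∃ a : ℝ, a • v = g v := by
    intro v
    exact Submodule.mem_span_singleton.mp (h v)
  -- the scalar is the same for any two nonzero vectors
  have key : ∀ (v w : V) (a b : ℝ), v ≠ 0 → w ≠ 0 → a • v = g v → b • w = g w →
      a = b := by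
    intro v w a b hv hw hav hbw
    by_cases hdep : w ∈ Submodule.span ℝ {v}
    · obtain ⟨t, rfl⟩ := Submodule.mem_span_singleton.mp hdep
      have h2 : (b - a) • (t • v) = 0 := by
        rw [sub_smul, hbw, LinearMap.map_smul, ← hav, smul_comm, sub_self]
      rcases smul_eq_zero.mp h2 with h3 | h3
      · exact (sub_eq_zero.mp h3).symm
      · exact absurd h3 hw
    · obtain ⟨d, hd⟩ := hsc (v + w)
      have hsum : d • (v + w) = a • v + b • w := by rw [hd, map_add, ← hav, ← hbw]
      have h2 : (d - a) • v = (b - d) • w := by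
        rw [sub_smul, sub_smul]
        rw [smul_add] at hsum
        linear_combination (norm := module) hsum
      have hbd : b = d := by
        by_contra hne
        have : w = ((b - d)⁻¹ * (d - a)) • v := by
          rw [mul_smul, h2, smul_smul, inv_mul_cancel₀ (sub_ne_zero.mpr hne), one_smul]
        exact hdep (this ▸ Submodule.smul_mem _ _ (Submodule.mem_span_singleton_self v))
      have : (d - a) • v = 0 := by rw [h2, ← hbd, sub_self, zero_smul]
      rcases smul_eq_zero.mp this with h3 | h3
      · rw [sub_eq_zero.mp h3] at hbd; exact hbd.symm
      · exact absurd h3 hv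
  by_cases hV : ∀ v : V, v = 0
  · exact ⟨1, fun v => by rw [hV v, map_zero, smul_zero]⟩
  · push_neg at hV
    obtain ⟨v₀, hv₀⟩ := hV
    obtain ⟨c, hc⟩ := hsc v₀
    refine ⟨c, fun v => ?_⟩
    by_cases hv : v = 0
    · rw [hv, map_zero, smul_zero]
    · obtain ⟨a, ha⟩ := hsc v
      have := key v v₀ a c hv hv₀ ha hc
      rw [← ha, this]

/-- For an invertible `M` and nonzero `i`, the reciprocity condition (every line
through the projective point `[i]` is mapped to itself by `M`) is equivalent to
`M` being a central-axial collineation with centre `[i]`: `M v = c • v + f v • i`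
for a nonzero scalar `c` and a linear functional `f`. -/
theorem reciprocity_iff_central_axial_collineation
    (M : Matrix (Fin 4) (Fin 4) ℝ) (hM : IsUnit M)
    (i : Fin 4 → ℝ) (hi : i ≠ 0) :
    (∀ v : Fin 4 → ℝ, M *ᵥ v ∈ Submodule.span ℝ ({v, i} : Set (Fin 4 → ℝ))) ↔
      (∃ c : ℝ, c ≠ 0 ∧ ∃ f : (Fin 4 → ℝ) →ₗ[ℝ] ℝ,
        ∀ v : Fin 4 → ℝ, M *ᵥ v = c • v + f v • i) := by
  have hMdet : IsUnit M.det := (Matrix.isUnit_iff_isUnit_det M).mp hM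
  have hMinj : ∀ v : Fin 4 → ℝ, M *ᵥ v = 0 → v = 0 := by
    intro v hv
    have : M⁻¹ *ᵥ (M *ᵥ v) = v := by
      rw [Matrix.mulVec_mulVec, Matrix.nonsing_inv_mul M hMdet, Matrix.one_mulVec]
    rw [← this, hv, Matrix.mulVec_zero]
  constructor
  · intro h
    set T : (Fin 4 → ℝ) →ₗ[ℝ] (Fin 4 → ℝ) := M.mulVecLin with hT
    set K : Submodule ℝ (Fin 4 → ℝ) := Submodule.span ℝ {i} with hK
    have hTK : K ≤ K.comap T := by
      rw [hK, Submodule.span_le, Set.singleton_subset_iff]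
      simpa [hT] using h i
    set g : ((Fin 4 → ℝ) ⧸ K) →ₗ[ℝ] ((Fin 4 → ℝ) ⧸ K) := Submodule.mapQ K K T hTK with hg
    have hgspan : ∀ w : (Fin 4 → ℝ) ⧸ K, g w ∈ Submodule.span ℝ {w} := by
      intro w
      obtain ⟨v, rfl⟩ := Submodule.mkQ_surjective K w
      rw [hg]
      have hmq : Submodule.mapQ K K T hTK (K.mkQ v) = K.mkQ (T v) := by
        simp [Submodule.mkQ_apply, Submodule.mapQ_apply]
      rw [hmq]
      obtain ⟨a, b, hab⟩ := Submodule.mem_span_pair.mp (h v)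
      have : K.mkQ (T v) = a • K.mkQ v := by
        have hib : K.mkQ (b • i) = 0 := by
          rw [Submodule.mkQ_apply, Submodule.Quotient.mk_eq_zero]
          exact Submodule.smul_mem _ _ (Submodule.mem_span_singleton_self i)
        have : T v = a • v + b • i := by rw [hT]; exact hab.symm
        rw [this, map_add, LinearMap.map_smul, hib, add_zero]
      rw [this]
      exact Submodule.smul_mem _ _ (Submodule.mem_span_singleton_self _)
    obtain ⟨c, hc⟩ := aux_scalar g hgspan
    -- T v - c • v ∈ K for all v
    have hmem : ∀ v : Fin 4 → ℝ, ∃ t : ℝ, t • i = T v - c • v := by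
      intro v
      have h1' : K.mkQ (T v) = c • K.mkQ v := by
        have := hc (K.mkQ v)
        rw [hg] at this
        simpa [Submodule.mkQ_apply, Submodule.mapQ_apply] using this
      have h1 : K.mkQ (T v - c • v) = 0 := by
        rw [map_sub, LinearMap.map_smul, h1', sub_self]
      rw [Submodule.mkQ_apply, Submodule.Quotient.mk_eq_zero] at h1
      exact Submodule.mem_span_singleton.mp h1
    -- build the functional f
    obtain ⟨j, hj⟩ := Function.ne_iff.mp hi
    simp only [Pi.zero_apply] at hj
    set φ : (Fin 4 → ℝ) →ₗ[ℝ] ℝ := (i j)⁻¹ • LinearMap.proj j with hφ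
    set f : (Fin 4 → ℝ) →ₗ[ℝ] ℝ := φ ∘ₗ (T - c • LinearMap.id) with hf
    have hfv : ∀ v : Fin 4 → ℝ, M *ᵥ v = c • v + f v • i := by
      intro v
      obtain ⟨t, ht⟩ := hmem v
      have hfvt : f v = t := by
        rw [hf]
        simp only [LinearMap.comp_apply, LinearMap.sub_apply, LinearMap.smul_apply,
          LinearMap.id_apply]
        rw [show T v - c • v = t • i from ht.symm, hφ]
        simp only [LinearMap.smul_apply, LinearMap.proj_apply, smul_eq_mul, Pi.smul_apply]
        field_simp
      have : T v = c • v + t • i := by rw [ht]; abel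
      rw [hfvt]
      rw [hT] at this
      simpa using this
    -- c ≠ 0
    have hcne : c ≠ 0 := by
      intro hc0
      subst hc0
      have hMv : ∀ v : Fin 4 → ℝ, M *ᵥ v = f v • i := by
        intro v; have := hfv v; simpa using this
      set v : Fin 4 → ℝ := Pi.single 0 1 with hv
      set w : Fin 4 → ℝ := Pi.single 1 1 with hw
      have hkey : M *ᵥ (f w • v - f v • w) = 0 := by
        rw [Matrix.mulVec_sub, Matrix.mulVec_smul, Matrix.mulVec_smul, hMv v, hMv w,
          smul_smul, smul_smul, mul_comm, sub_self]
      have h0 : f w • v - f v • w = 0 := hMinj _ hkey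
      have hfw : f w = 0 := by
        have := congrFun h0 0
        simpa [hv, hw, Pi.single_apply] using this
      have : w = 0 := hMinj w (by rw [hMv w, hfw, zero_smul])
      have := congrFun this 1
      simp [hw] at this
    exact ⟨c, hcne, f, hfv⟩
  · rintro ⟨c, hc, f, hf⟩ v
    rw [hf v]
    exact Submodule.add_mem _
      (Submodule.smul_mem _ _ (Submodule.subset_span (by simp)))
      (Submodule.smul_mem _ _ (Submodule.subset_span (by simp)))
end

section
/- Let D be the 4×4 real matrix with rows (0,−1,0,0), (1,0,0,0), (0,0,−3/4,−7/4), (0,0,1/4,−3/4), and let M = D^{−T}·D (where D^{−T} is the inverse transpose). Then M equals the matrix with rows (−1,0,0,0), (0,−1,0,0), (0,0,1/2,3/2), (0,0,−3/2,−5/2), and there exists a linear functional f : ℝ⁴ → ℝ such that M·v = −v + f(v)•i for all v ∈ ℝ⁴, where i = (0,0,−1,1); moreover f(i) = 0. Hence M is a central-axial collineation with centre [i] lying on its fixed plane (an elation), and D satisfies the reciprocity condition for projections with centre [i]. -/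
open Matrix

/-- The duality of the reciprocal example. -/
noncomputable def Dmat : Matrix (Fin 4) (Fin 4) ℝ :=
  !![0, -1, 0, 0;
     1, 0, 0, 0;
     0, 0, -3/4, -7/4;
     0, 0, 1/4, -3/4]

lemma Dmat_inv : Dmat⁻¹ =
    !![0, 1, 0, 0;
       -1, 0, 0, 0;
       0, 0, -3/4, 7/4;
       0, 0, -1/4, -3/4] := by
  apply inv_eq_right_inv
  ext i j
  fin_cases i <;> fin_cases j <;>
    norm_num [Dmat, Matrix.mul_apply, Fin.sum_univ_four, Matrix.one_apply, Matrix.vecHead, Matrix.vecTail, Fin.ext_iff, Matrix.cons_val_two, Matrix.cons_val_three]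

/-- The twice-iterated duality `M = D⁻ᵀ * D` of the reciprocal example equals the
explicit matrix below, and `M v = -v + f v • i` for a linear functional `f` with
`f i = 0`, where `i = (0, 0, -1, 1)`: `M` is an elation with centre `[i]` on its
fixed plane, so `D` satisfies the reciprocity condition for projections with
centre `[i]`. -/
theorem reciprocal_example_is_elation :
    (Dmat⁻¹)ᵀ * Dmat =
        !![-1, 0, 0, 0;
           0, -1, 0, 0;
           0, 0, 1/2, 3/2;
           0, 0, -3/2, -5/2] ∧
      ∃ f : (Fin 4 → ℝ) →ₗ[ℝ] ℝ,
        (∀ v : Fin 4 → ℝ, ((Dmat⁻¹)ᵀ * Dmat) *ᵥ v = -v + f v • ![0, 0, -1, 1]) ∧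
          f ![0, 0, -1, 1] = 0 := by
  have hM : (Dmat⁻¹)ᵀ * Dmat =
      !![-1, 0, 0, 0;
         0, -1, 0, 0;
         0, 0, 1/2, 3/2;
         0, 0, -3/2, -5/2] := by
    rw [Dmat_inv]
    ext i j
    fin_cases i <;> fin_cases j <;>
      norm_num [Dmat, Matrix.mul_apply, Matrix.transpose_apply, Fin.sum_univ_four, Matrix.vecHead, Matrix.vecTail, Matrix.cons_val_two, Matrix.cons_val_three]
  refine ⟨hM, (-(3/2 : ℝ)) • ((LinearMap.proj (2 : Fin 4) : (Fin 4 → ℝ) →ₗ[ℝ] ℝ) + (LinearMap.proj (3 : Fin 4) : (Fin 4 → ℝ) →ₗ[ℝ] ℝ)), ?_, ?_⟩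
  · intro v
    rw [hM]
    funext j
    fin_cases j <;>
      simp [Matrix.mulVec, dotProduct, Fin.sum_univ_four, Matrix.vecHead, Matrix.vecTail] <;> ring
  · simp
end
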